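/- Let B = (B_t)_{t≥0} be a standard one-dimensional Brownian motion with B_0 = 0 and almost surely continuous paths. Then almost surely, for every T > 0, sup_{t ∈ [0,T]} |γ ∫_0^t e^{−γ(t−s)} B_s ds − B_t| → 0 as γ → ∞. In particular, the normalized integrated Ornstein–Uhlenbeck process A X^γ_t = γ ∫_0^t e^{−γ(t−s)} B_s ds driven by B with zero initial conditions converges to B uniformly on compact time intervals, in probability. -/

import Mathlib

open MeasureTheory ProbabilityTheory Filter

/-- A standard one-dimensional Brownian motion `B` on a probability space `(Ω, P)`:
`B 0 = 0`, almost surely continuous paths, independent increments, and Gaussian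
increments `B t − B s ∼ N(0, t − s)` for `0 ≤ s ≤ t`. -/
structure IsStandardBrownianMotion {Ω : Type*} [MeasurableSpace Ω] (P : Measure Ω)
    (B : ℝ → Ω → ℝ) : Prop where
  isProbability : IsProbabilityMeasure P
  measurable : ∀ t : ℝ, Measurable (B t)
  init : ∀ ω, B 0 ω = 0
  cont : ∀ᵐ ω ∂P, Continuous fun t : ℝ => B t ω
  indep_incr : ∀ (n : ℕ) (t : Fin (n + 1) → ℝ), (∀ i, 0 ≤ t i) → StrictMono t →
    iIndepFun
      (fun i : Fin n => fun ω => B (t i.succ) ω - B (t i.castSucc) ω) P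
  gauss_incr : ∀ s t : ℝ, 0 ≤ s → s ≤ t →
    P.map (fun ω => B t ω - B s ω) = gaussianReal 0 (Real.toNNReal (t - s))

open Topology intervalIntegral


lemma exp_int (γ : ℝ) (hγ : γ ≠ 0) (a t : ℝ) :
    ∫ s in a..t, Real.exp (-(γ * (t - s))) = (1 - Real.exp (-(γ * (t - a)))) / γ := by
  have h : ∀ s ∈ Set.uIcc a t, HasDerivAt (fun s => Real.exp (-(γ * (t - s))) / γ)
      (Real.exp (-(γ * (t - s)))) s := by
    intro s _
    have h1 : HasDerivAt (fun s : ℝ => γ * s - γ * t) γ s := by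
      simpa using ((hasDerivAt_id s).const_mul γ).sub_const (γ * t)
    have h2 : HasDerivAt (fun s : ℝ => -(γ * (t - s))) γ s :=
      h1.congr_of_eventuallyEq (Eventually.of_forall fun x => by ring)
    have h3 := (Real.hasDerivAt_exp (-(γ * (t - s)))).comp s h2
    have h4 := h3.div_const γ
    simpa [mul_div_assoc, mul_div_cancel_right₀ _ hγ] using h4
  have hint : IntervalIntegrable (fun s => Real.exp (-(γ * (t - s)))) volume a t :=
    (by fun_prop : Continuous fun s : ℝ => Real.exp (-(γ * (t - s)))).intervalIntegrable a t
  rw [integral_eq_sub_of_hasDerivAt h hint]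
  simp [sub_div]

set_option maxHeartbeats 1000000 in
lemma oup_unif (f : ℝ → ℝ) (hf : Continuous f) (hf0 : f 0 = 0) (T : ℝ) :
    TendstoUniformlyOn
      (fun (γ : ℝ) (t : ℝ) => γ * ∫ s in (0:ℝ)..t, Real.exp (-(γ * (t - s))) * f s)
      f atTop (Set.Icc 0 T) := by
  rw [Metric.tendstoUniformlyOn_iff]
  intro ε hε
  -- bound M on |f| over [0,T]
  obtain ⟨M₀, hM₀⟩ := (isCompact_Icc : IsCompact (Set.Icc (0:ℝ) T)).exists_bound_of_continuousOn
    hf.continuousOn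
  set M : ℝ := max M₀ 0 with hMdef
  have hM0 : 0 ≤ M := le_max_right _ _
  have hMb : ∀ x ∈ Set.Icc (0:ℝ) T, |f x| ≤ M := fun x hx => (hM₀ x hx).trans (le_max_left _ _)
  -- uniform continuity
  obtain ⟨δ, hδpos, hδ⟩ := Metric.uniformContinuousOn_iff.mp
    ((isCompact_Icc : IsCompact (Set.Icc (0:ℝ) T)).uniformContinuousOn_of_continuous
      hf.continuousOn) (ε/4) (by positivity)
  -- the exponential decay bound
  have hdecay : Tendsto (fun γ : ℝ => (2*M*T + M) * (γ * Real.exp (-(γ * (δ/2))))) atTop (𝓝 0) := by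
    have h1 : Tendsto (fun γ : ℝ => γ * (δ/2)) atTop atTop :=
      Tendsto.atTop_mul_const (by positivity) tendsto_id
    have h2 := (Real.tendsto_pow_mul_exp_neg_atTop_nhds_zero 1).comp h1
    have h3 : Tendsto (fun γ : ℝ => (2/δ) * ((γ * (δ/2))^1 * Real.exp (-(γ * (δ/2)))))
        atTop (𝓝 ((2/δ) * 0)) := h2.const_mul _
    have h4 : (fun γ : ℝ => (2/δ) * ((γ * (δ/2))^1 * Real.exp (-(γ * (δ/2)))))
        = fun γ : ℝ => γ * Real.exp (-(γ * (δ/2))) := by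
      funext γ; field_simp
    rw [h4, mul_zero] at h3
    simpa using h3.const_mul (2*M*T + M)
  filter_upwards [eventually_ge_atTop (1:ℝ),
    hdecay.eventually (gt_mem_nhds (show (0:ℝ) < ε/2 by positivity))] with γ hγ1 hγ2 t ht
  have hγpos : (0:ℝ) < γ := lt_of_lt_of_le one_pos hγ1
  have hγne : γ ≠ 0 := ne_of_gt hγpos
  have ht0 : (0:ℝ) ≤ t := ht.1
  have htT : t ≤ T := ht.2
  -- integrability facts
  have hcont1 : Continuous fun s : ℝ => Real.exp (-(γ * (t - s))) * f s := by fun_prop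
  have hcont2 : Continuous fun s : ℝ => Real.exp (-(γ * (t - s))) * (f s - f t) := by fun_prop
  have hcont3 : Continuous fun s : ℝ => Real.exp (-(γ * (t - s))) := by fun_prop
  -- key identity
  have h1 : (∫ s in (0:ℝ)..t, Real.exp (-(γ * (t - s))) * (f s - f t))
      = (∫ s in (0:ℝ)..t, Real.exp (-(γ * (t - s))) * f s)
        - (∫ s in (0:ℝ)..t, Real.exp (-(γ * (t - s)))) * f t := by
    have heq : (fun s => Real.exp (-(γ * (t - s))) * (f s - f t))
        = fun s => Real.exp (-(γ * (t - s))) * f s - Real.exp (-(γ * (t - s))) * f t :=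
      funext fun s => by ring
    rw [heq, intervalIntegral.integral_sub (g := fun s => Real.exp (-(γ * (t - s))) * f t) (hcont1.intervalIntegrable _ _)
      ((hcont3.mul continuous_const).intervalIntegrable _ _),
      intervalIntegral.integral_mul_const]
  have hE : γ * (∫ s in (0:ℝ)..t, Real.exp (-(γ * (t - s))) * f s) - f t
      = γ * (∫ s in (0:ℝ)..t, Real.exp (-(γ * (t - s))) * (f s - f t))
        - Real.exp (-(γ * t)) * f t := by
    rw [h1, exp_int γ hγne 0 t]
    field_simp
    ring
  rw [Real.dist_eq, abs_sub_comm, hE]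
  -- now bound
  have key : |γ * (∫ s in (0:ℝ)..t, Real.exp (-(γ * (t - s))) * (f s - f t))
      - Real.exp (-(γ * t)) * f t| ≤ ε/2 + (2*M*T + M) * (γ * Real.exp (-(γ * (δ/2)))) := by
    have hTnn : (0:ℝ) ≤ T := le_trans ht0 htT
    have hexp_nonneg : ∀ x : ℝ, (0:ℝ) ≤ Real.exp x := fun x => (Real.exp_pos x).le
    have hrem_nonneg : 0 ≤ (2*M*T + M) * (γ * Real.exp (-(γ * (δ/2)))) :=
      mul_nonneg (by nlinarith) (mul_nonneg hγpos.le (hexp_nonneg _))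
    have habs_le : ∀ X Y : ℝ, |X - Y| ≤ |X| + |Y| := fun X Y => abs_sub X Y
    by_cases hcase : t ≤ δ/2
    · -- small t
      have hbound1 : |γ * (∫ s in (0:ℝ)..t, Real.exp (-(γ * (t - s))) * (f s - f t))| ≤ ε/4 := by
        have habs : |(∫ s in (0:ℝ)..t, Real.exp (-(γ * (t - s))) * (f s - f t))|
            ≤ ∫ s in (0:ℝ)..t, |Real.exp (-(γ * (t - s))) * (f s - f t)| :=
          intervalIntegral.abs_integral_le_integral_abs ht0
        have hmono : (∫ s in (0:ℝ)..t, |Real.exp (-(γ * (t - s))) * (f s - f t)|)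
            ≤ ∫ s in (0:ℝ)..t, Real.exp (-(γ * (t - s))) * (ε/4) := by
          apply intervalIntegral.integral_mono_on ht0 (hcont2.abs.intervalIntegrable _ _)
            ((hcont3.mul continuous_const).intervalIntegrable _ _)
          intro s hs
          rw [abs_mul, Real.abs_exp]
          refine mul_le_mul_of_nonneg_left ?_ (hexp_nonneg _)
          have hs1 : s ∈ Set.Icc (0:ℝ) T := ⟨hs.1, le_trans hs.2 htT⟩
          have hd : dist s t < δ := by
            rw [Real.dist_eq, abs_sub_comm, abs_of_nonneg (by linarith [hs.2] : (0:ℝ) ≤ t - s)]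
            linarith [hs.1]
          have := hδ s hs1 t ht hd
          rw [Real.dist_eq] at this
          exact this.le
        have hval : (∫ s in (0:ℝ)..t, Real.exp (-(γ * (t - s))) * (ε/4))
            = (1 - Real.exp (-(γ * t))) / γ * (ε/4) := by
          rw [intervalIntegral.integral_mul_const, exp_int γ hγne 0 t]
          norm_num
        have h1e : Real.exp (-(γ * t)) ≤ 1 := Real.exp_le_one_iff.mpr (by nlinarith)
        have hse : 0 ≤ Real.exp (-(γ * t)) := hexp_nonneg _
        have hchain : |(∫ s in (0:ℝ)..t, Real.exp (-(γ * (t - s))) * (f s - f t))|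
            ≤ (1 - Real.exp (-(γ * t))) / γ * (ε/4) := by
          rw [← hval]; exact le_trans habs hmono
        rw [abs_mul, abs_of_pos hγpos]
        have hfin : γ * ((1 - Real.exp (-(γ * t))) / γ * (ε/4))
            = (1 - Real.exp (-(γ * t))) * (ε/4) := by field_simp
        have habs_nonneg : (0:ℝ) ≤ |(∫ s in (0:ℝ)..t, Real.exp (-(γ * (t - s))) * (f s - f t))| :=
          abs_nonneg _
        nlinarith [mul_le_mul_of_nonneg_left hchain hγpos.le]
      have hbound2 : |Real.exp (-(γ * t)) * f t| ≤ ε/4 := by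
        have hd : dist t (0:ℝ) < δ := by
          rw [Real.dist_eq, sub_zero, abs_of_nonneg ht0]; linarith
        have hft := hδ t ht 0 ⟨le_refl 0, hTnn⟩ hd
        rw [Real.dist_eq, hf0, sub_zero] at hft
        rw [abs_mul, Real.abs_exp]
        have h1e : Real.exp (-(γ * t)) ≤ 1 := Real.exp_le_one_iff.mpr (by nlinarith)
        nlinarith [hexp_nonneg (-(γ * t)), abs_nonneg (f t)]
      calc |γ * (∫ s in (0:ℝ)..t, Real.exp (-(γ * (t - s))) * (f s - f t))
          - Real.exp (-(γ * t)) * f t|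
          ≤ |γ * (∫ s in (0:ℝ)..t, Real.exp (-(γ * (t - s))) * (f s - f t))|
            + |Real.exp (-(γ * t)) * f t| := habs_le _ _
        _ ≤ ε/4 + ε/4 := add_le_add hbound1 hbound2
        _ ≤ ε/2 + (2*M*T + M) * (γ * Real.exp (-(γ * (δ/2)))) := by linarith
    · -- t > δ/2 : split the integral at c = t - δ/2
      push_neg at hcase
      set c : ℝ := t - δ/2 with hc
      have hc0 : (0:ℝ) ≤ c := by simp [hc]; linarith
      have hct : c ≤ t := by simp [hc]; linarith
      have hsplit : (∫ s in (0:ℝ)..t, Real.exp (-(γ * (t - s))) * (f s - f t))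
          = (∫ s in (0:ℝ)..c, Real.exp (-(γ * (t - s))) * (f s - f t))
            + (∫ s in c..t, Real.exp (-(γ * (t - s))) * (f s - f t)) :=
        (intervalIntegral.integral_add_adjacent_intervals
          (hcont2.intervalIntegrable _ _) (hcont2.intervalIntegrable _ _)).symm
      -- head bound
      have hhead : |(∫ s in (0:ℝ)..c, Real.exp (-(γ * (t - s))) * (f s - f t))|
          ≤ 2 * M * Real.exp (-(γ * (δ/2))) * c := by
        have := intervalIntegral.norm_integral_le_of_norm_le_const
          (C := 2 * M * Real.exp (-(γ * (δ/2))))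
          (f := fun s => Real.exp (-(γ * (t - s))) * (f s - f t)) (a := (0:ℝ)) (b := c) ?_
        · rw [Real.norm_eq_abs] at this
          rwa [sub_zero, abs_of_nonneg hc0] at this
        · intro x hx
          rw [Set.uIoc_of_le hc0] at hx
          have hx1 : (0:ℝ) < x := hx.1
          have hx2 : x ≤ c := hx.2
          rw [Real.norm_eq_abs, abs_mul, Real.abs_exp]
          have hxT : x ∈ Set.Icc (0:ℝ) T := ⟨hx1.le, by linarith⟩
          have hfx : |f x| ≤ M := hMb x hxT
          have hft : |f t| ≤ M := hMb t ht
          have hfd : |f x - f t| ≤ 2 * M := by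
            calc |f x - f t| ≤ |f x| + |f t| := habs_le _ _
              _ ≤ 2 * M := by linarith
          have hee : Real.exp (-(γ * (t - x))) ≤ Real.exp (-(γ * (δ/2))) := by
            apply Real.exp_le_exp.mpr
            have : δ/2 ≤ t - x := by simp [hc] at hx2; linarith
            nlinarith
          calc Real.exp (-(γ * (t - x))) * |f x - f t|
              ≤ Real.exp (-(γ * (δ/2))) * (2 * M) :=
                mul_le_mul hee hfd (abs_nonneg _) (hexp_nonneg _)
            _ = 2 * M * Real.exp (-(γ * (δ/2))) := by ring
      -- tail bound
      have htail : |(∫ s in c..t, Real.exp (-(γ * (t - s))) * (f s - f t))|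
          ≤ (1 - Real.exp (-(γ * (δ/2)))) / γ * (ε/4) := by
        have habs : |(∫ s in c..t, Real.exp (-(γ * (t - s))) * (f s - f t))|
            ≤ ∫ s in c..t, |Real.exp (-(γ * (t - s))) * (f s - f t)| :=
          intervalIntegral.abs_integral_le_integral_abs hct
        have hmono : (∫ s in c..t, |Real.exp (-(γ * (t - s))) * (f s - f t)|)
            ≤ ∫ s in c..t, Real.exp (-(γ * (t - s))) * (ε/4) := by
          apply intervalIntegral.integral_mono_on hct (hcont2.abs.intervalIntegrable _ _)
            ((hcont3.mul continuous_const).intervalIntegrable _ _)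
          intro s hs
          rw [abs_mul, Real.abs_exp]
          refine mul_le_mul_of_nonneg_left ?_ (hexp_nonneg _)
          have hsc : c ≤ s := hs.1
          have hst : s ≤ t := hs.2
          have hs1 : s ∈ Set.Icc (0:ℝ) T := ⟨le_trans hc0 hsc, le_trans hst htT⟩
          have hd : dist s t < δ := by
            rw [Real.dist_eq, abs_sub_comm, abs_of_nonneg (by linarith : (0:ℝ) ≤ t - s)]
            simp [hc] at hsc
            linarith
          have := hδ s hs1 t ht hd
          rw [Real.dist_eq] at this
          exact this.le
        have hval : (∫ s in c..t, Real.exp (-(γ * (t - s))) * (ε/4))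
            = (1 - Real.exp (-(γ * (δ/2)))) / γ * (ε/4) := by
          rw [intervalIntegral.integral_mul_const, exp_int γ hγne c t,
            show t - c = δ/2 by simp [hc]]
        rw [← hval]
        exact le_trans habs hmono
      -- exp term bound
      have hterm : |Real.exp (-(γ * t)) * f t| ≤ M * Real.exp (-(γ * (δ/2))) := by
        rw [abs_mul, Real.abs_exp]
        have hee : Real.exp (-(γ * t)) ≤ Real.exp (-(γ * (δ/2))) := by
          apply Real.exp_le_exp.mpr
          nlinarith
        have hft : |f t| ≤ M := hMb t ht
        nlinarith [hexp_nonneg (-(γ * t)), hexp_nonneg (-(γ * (δ/2))), abs_nonneg (f t)]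
      -- combine
      have h1e : Real.exp (-(γ * (δ/2))) ≤ 1 := Real.exp_le_one_iff.mpr (by nlinarith)
      have hcT : c ≤ T := by simp [hc]; linarith
      have hγtail : γ * ((1 - Real.exp (-(γ * (δ/2)))) / γ * (ε/4))
          = (1 - Real.exp (-(γ * (δ/2)))) * (ε/4) := by field_simp
      have hint_abs : |γ * (∫ s in (0:ℝ)..t, Real.exp (-(γ * (t - s))) * (f s - f t))|
          ≤ 2 * M * T * (γ * Real.exp (-(γ * (δ/2)))) + ε/4 := by
        rw [hsplit, mul_add]
        calc |γ * (∫ s in (0:ℝ)..c, Real.exp (-(γ * (t - s))) * (f s - f t))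
            + γ * (∫ s in c..t, Real.exp (-(γ * (t - s))) * (f s - f t))|
            ≤ |γ * (∫ s in (0:ℝ)..c, Real.exp (-(γ * (t - s))) * (f s - f t))|
              + |γ * (∫ s in c..t, Real.exp (-(γ * (t - s))) * (f s - f t))| := abs_add_le _ _
          _ ≤ γ * (2 * M * Real.exp (-(γ * (δ/2))) * c)
              + γ * ((1 - Real.exp (-(γ * (δ/2)))) / γ * (ε/4)) := by
            rw [abs_mul, abs_mul, abs_of_pos hγpos]
            exact add_le_add (mul_le_mul_of_nonneg_left hhead hγpos.le)
              (mul_le_mul_of_nonneg_left htail hγpos.le)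
          _ ≤ 2 * M * T * (γ * Real.exp (-(γ * (δ/2)))) + ε/4 := by
            rw [hγtail]
            have h1 : γ * (2 * M * Real.exp (-(γ * (δ/2))) * c)
                ≤ 2 * M * T * (γ * Real.exp (-(γ * (δ/2)))) := by
              nlinarith [hexp_nonneg (-(γ * (δ/2))), mul_nonneg hM0 (hexp_nonneg (-(γ * (δ/2))))]
            have h2 : (1 - Real.exp (-(γ * (δ/2)))) * (ε/4) ≤ ε/4 := by
              nlinarith [hexp_nonneg (-(γ * (δ/2)))]
            linarith
      have hMγ : M * Real.exp (-(γ * (δ/2))) ≤ M * (γ * Real.exp (-(γ * (δ/2)))) := by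
        nlinarith [hexp_nonneg (-(γ * (δ/2))), mul_nonneg hM0 (hexp_nonneg (-(γ * (δ/2))))]
      calc |γ * (∫ s in (0:ℝ)..t, Real.exp (-(γ * (t - s))) * (f s - f t))
          - Real.exp (-(γ * t)) * f t|
          ≤ |γ * (∫ s in (0:ℝ)..t, Real.exp (-(γ * (t - s))) * (f s - f t))|
            + |Real.exp (-(γ * t)) * f t| := habs_le _ _
        _ ≤ (2 * M * T * (γ * Real.exp (-(γ * (δ/2)))) + ε/4)
            + M * (γ * Real.exp (-(γ * (δ/2)))) := by
            have := le_trans hterm hMγ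
            linarith
        _ ≤ ε/2 + (2*M*T + M) * (γ * Real.exp (-(γ * (δ/2)))) := by nlinarith
  calc _ ≤ ε/2 + (2*M*T + M) * (γ * Real.exp (-(γ * (δ/2)))) := key
    _ < ε/2 + ε/2 := by linarith
    _ = ε := by ring

lemma err_cont (f : ℝ → ℝ) (hf : Continuous f) (γ : ℝ) :
    Continuous fun t : ℝ => γ * (∫ s in (0:ℝ)..t, Real.exp (-(γ * (t - s))) * f s) - f t := by
  have h1 : ∀ t : ℝ, (∫ s in (0:ℝ)..t, Real.exp (-(γ * (t - s))) * f s)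
      = Real.exp (-(γ * t)) * ∫ s in (0:ℝ)..t, Real.exp (γ * s) * f s := by
    intro t
    have heq : (fun s : ℝ => Real.exp (-(γ * (t - s))) * f s)
        = fun s : ℝ => Real.exp (-(γ * t)) * (Real.exp (γ * s) * f s) := by
      funext s
      have harg : -(γ * (t - s)) = -(γ * t) + γ * s := by ring
      rw [harg, Real.exp_add, mul_assoc]
    rw [heq, intervalIntegral.integral_const_mul]
  have hG : Continuous fun t : ℝ => ∫ s in (0:ℝ)..t, Real.exp (γ * s) * f s :=
    intervalIntegral.continuous_primitive
      (fun a b => ((by fun_prop : Continuous fun s : ℝ => Real.exp (γ * s) * f s)).intervalIntegrable a b) 0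
  have hfun : (fun t : ℝ => γ * (∫ s in (0:ℝ)..t, Real.exp (-(γ * (t - s))) * f s) - f t)
      = fun t : ℝ => γ * (Real.exp (-(γ * t))
          * ∫ s in (0:ℝ)..t, Real.exp (γ * s) * f s) - f t := by
    funext t; rw [h1 t]
  rw [hfun]
  exact (continuous_const.mul ((by fun_prop : Continuous fun t : ℝ =>
    Real.exp (-(γ * t))).mul hG)).sub hf

lemma integral_meas {Ω : Type*} [MeasurableSpace Ω] (B' : ℝ → Ω → ℝ)
    (hB' : Measurable (Function.uncurry B')) (γ t : ℝ) :
    Measurable fun ω => ∫ s in (0:ℝ)..t, Real.exp (-(γ * (t - s))) * B' s ω := by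
  have hjm : StronglyMeasurable fun p : Ω × ℝ => Real.exp (-(γ * (t - p.2))) * B' p.2 p.1 := by
    apply Measurable.stronglyMeasurable
    exact (((measurable_const.sub measurable_snd).const_mul γ).neg.exp).mul
      (hB'.comp (measurable_snd.prodMk measurable_fst))
  have h1 : StronglyMeasurable fun ω : Ω =>
      ∫ s in Set.Ioc (0:ℝ) t, Real.exp (-(γ * (t - s))) * B' s ω :=
    hjm.integral_prod_right'
  have h2 : StronglyMeasurable fun ω : Ω =>
      ∫ s in Set.Ioc t (0:ℝ), Real.exp (-(γ * (t - s))) * B' s ω :=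
    hjm.integral_prod_right'
  have heq : (fun ω => ∫ s in (0:ℝ)..t, Real.exp (-(γ * (t - s))) * B' s ω)
      = fun ω => (∫ s in Set.Ioc (0:ℝ) t, Real.exp (-(γ * (t - s))) * B' s ω)
          - ∫ s in Set.Ioc t (0:ℝ), Real.exp (-(γ * (t - s))) * B' s ω :=
    funext fun ω => rfl
  rw [heq]
  exact h1.measurable.sub h2.measurable


set_option maxHeartbeats 1000000 in
/-- Let `B` be a standard one-dimensional Brownian motion with `B 0 = 0` and
almost surely continuous paths. Then almost surely, for every `T > 0`,
`sup_{t ∈ [0,T]} |γ ∫_0^t e^{−γ(t−s)} B_s ds − B_t| → 0` as `γ → ∞`. In particular, the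
normalized integrated Ornstein–Uhlenbeck process `A X^γ_t = γ ∫_0^t e^{−γ(t−s)} B_s ds`
driven by `B` with zero initial conditions converges to `B` uniformly on compact time
intervals, in probability. -/
theorem integratedOU_brownian_tendsto_uniformly
    {Ω : Type*} [MeasurableSpace Ω] (P : Measure Ω) (B : ℝ → Ω → ℝ)
    (hB : IsStandardBrownianMotion P B) :
    (∀ᵐ ω ∂P, ∀ T > (0 : ℝ),
      TendstoUniformlyOn
        (fun (γ : ℝ) (t : ℝ) => γ * ∫ s in (0 : ℝ)..t, Real.exp (-(γ * (t - s))) * B s ω)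
        (fun t => B t ω) atTop (Set.Icc 0 T)) ∧
    (∀ T > (0 : ℝ), ∀ ε > (0 : ℝ),
      Tendsto
        (fun γ : ℝ => P {ω | ∃ t ∈ Set.Icc (0 : ℝ) T,
          ε ≤ |γ * (∫ s in (0 : ℝ)..t, Real.exp (-(γ * (t - s))) * B s ω) - B t ω|})
        atTop (nhds 0)) := by
  haveI := hB.isProbability
  classical
  obtain ⟨N, hNmeas, hNnull, hN⟩ : ∃ N : Set Ω, MeasurableSet N ∧ P N = 0 ∧
      ∀ ω ∉ N, Continuous fun t : ℝ => B t ω := by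
    have h := hB.cont
    rw [ae_iff] at h
    exact ⟨toMeasurable P {ω | ¬ Continuous fun t : ℝ => B t ω},
      measurableSet_toMeasurable _ _, by rwa [measure_toMeasurable],
      fun ω hω => by by_contra hc; exact hω (subset_toMeasurable _ _ hc)⟩
  have hNae : ∀ᵐ ω ∂P, ω ∉ N := measure_eq_zero_iff_ae_notMem.mp hNnull
  have part1 : ∀ᵐ ω ∂P, ∀ T > (0 : ℝ),
      TendstoUniformlyOn
        (fun (γ : ℝ) (t : ℝ) => γ * ∫ s in (0 : ℝ)..t, Real.exp (-(γ * (t - s))) * B s ω)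
        (fun t => B t ω) atTop (Set.Icc 0 T) := by
    filter_upwards [hB.cont] with ω hω T _
    exact oup_unif (fun t => B t ω) hω (hB.init ω) T
  refine ⟨part1, ?_⟩
  intro T hT ε hε
  set B' : ℝ → Ω → ℝ := fun t ω => if ω ∈ N then 0 else B t ω with hB'def
  have hBB' : ∀ ω ∉ N, ∀ s, B' s ω = B s ω := fun ω hω s => if_neg hω
  have hB'cont : ∀ ω, Continuous fun t => B' t ω := by
    intro ω
    by_cases hω : ω ∈ N
    · simp only [hB'def, hω, if_true]; exact continuous_const
    · simp only [hB'def, hω, if_false]; exact hN ω hω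
  have hB'measC : ∀ t : ℝ, Measurable (B' t) :=
    fun t => Measurable.ite hNmeas measurable_const (hB.measurable t)
  have hB'meas : Measurable (Function.uncurry B') :=
    measurable_uncurry_of_continuous_of_measurable hB'cont hB'measC
  have herrmeas : ∀ γ t : ℝ, Measurable fun ω =>
      γ * (∫ s in (0:ℝ)..t, Real.exp (-(γ * (t - s))) * B' s ω) - B' t ω :=
    fun γ t => ((integral_meas B' hB'meas γ t).const_mul γ).sub (hB'measC t)
  set S : ℝ → Set Ω := fun γ => ⋃ q : ℚ, {ω | (q:ℝ) ∈ Set.Icc (0:ℝ) T ∧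
      ε/2 ≤ |γ * (∫ s in (0:ℝ)..(q:ℝ), Real.exp (-(γ * ((q:ℝ) - s))) * B' s ω) - B' q ω|}
    with hSdef
  have hSmeas : ∀ γ, MeasurableSet (S γ) := by
    intro γ
    refine MeasurableSet.iUnion fun q => ?_
    by_cases hq : (q:ℝ) ∈ Set.Icc (0:ℝ) T
    · simp only [hq, true_and]
      exact measurableSet_le measurable_const (herrmeas γ q).abs
    · simp [hq]
  -- inclusion of the bad event
  have hsub : ∀ γ : ℝ, {ω | ∃ t ∈ Set.Icc (0 : ℝ) T,
      ε ≤ |γ * (∫ s in (0 : ℝ)..t, Real.exp (-(γ * (t - s))) * B s ω) - B t ω|}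
      ⊆ N ∪ S γ := by
    intro γ ω hω
    by_cases hωN : ω ∈ N
    · exact Or.inl hωN
    right
    obtain ⟨t, ht, hεt⟩ := hω
    have hcont : Continuous fun u : ℝ =>
        γ * (∫ s in (0:ℝ)..u, Real.exp (-(γ * (u - s))) * B s ω) - B u ω :=
      err_cont _ (hN ω hωN) γ
    have ht0 : 0 < t := by
      rcases lt_or_eq_of_le ht.1 with h | h
      · exact h
      · exfalso
        rw [← h] at hεt
        simp [intervalIntegral.integral_same, hB.init ω] at hεt
        linarith
    have hgt : ε/2 < |γ * (∫ s in (0:ℝ)..t, Real.exp (-(γ * (t - s))) * B s ω) - B t ω| :=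
      lt_of_lt_of_le (by linarith) hεt
    have hev : ∀ᶠ u in nhds t, ε/2 < |γ * (∫ s in (0:ℝ)..u,
        Real.exp (-(γ * (u - s))) * B s ω) - B u ω| :=
      (hcont.abs.continuousAt).eventually (eventually_gt_nhds hgt)
    obtain ⟨η, hη, hball⟩ := Metric.eventually_nhds_iff.mp hev
    obtain ⟨q, hq1, hq2⟩ := exists_rat_btwn (show max (t - η) 0 < t from
      max_lt (by linarith) ht0)
    have hq0 : (0:ℝ) ≤ (q:ℝ) := le_of_lt (lt_of_le_of_lt (le_max_right _ _) hq1)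
    have hqT : (q:ℝ) ≤ T := le_trans hq2.le ht.2
    have hqd : dist (q:ℝ) t < η := by
      rw [Real.dist_eq, abs_sub_comm, abs_of_nonneg (by linarith : (0:ℝ) ≤ t - (q:ℝ))]
      have := lt_of_le_of_lt (le_max_left (t - η) 0) hq1
      linarith
    have hqgt := hball hqd
    refine Set.mem_iUnion.mpr ⟨q, ⟨⟨hq0, hqT⟩, ?_⟩⟩
    have hint_eq : (∫ s in (0:ℝ)..(q:ℝ), Real.exp (-(γ * ((q:ℝ) - s))) * B' s ω)
        = ∫ s in (0:ℝ)..(q:ℝ), Real.exp (-(γ * ((q:ℝ) - s))) * B s ω := by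
      simp only [hBB' ω hωN]
    rw [hint_eq, hBB' ω hωN]
    exact hqgt.le
  -- convergence of P (S γ) to 0
  have hS0 : Tendsto (fun γ => P (S γ)) atTop (nhds 0) := by
    have hint : Tendsto (fun γ => ∫ ω, (S γ).indicator (fun _ => (1:ℝ)) ω ∂P)
        atTop (nhds 0) := by
      have := tendsto_integral_filter_of_dominated_convergence (μ := P)
        (F := fun γ (ω : Ω) => (S γ).indicator (fun _ => (1:ℝ)) ω)
        (f := fun _ => (0:ℝ)) (l := atTop) (bound := fun _ => (1:ℝ))
        (Eventually.of_forall fun γ =>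
          (stronglyMeasurable_const.indicator (hSmeas γ)).aestronglyMeasurable)
        (Eventually.of_forall fun γ => Eventually.of_forall fun ω => by
          by_cases hω : ω ∈ S γ <;> simp [Set.indicator_apply, hω])
        (integrable_const 1)
        ?_
      · simpa using this
      · filter_upwards [part1, hNae] with ω hω hωN
        have huc := Metric.tendstoUniformlyOn_iff.mp (hω T hT) (ε/2) (by positivity)
        have hev : ∀ᶠ γ : ℝ in atTop, (S γ).indicator (fun _ => (1:ℝ)) ω = 0 := by
          filter_upwards [huc] with γ hγ
          have hnot : ω ∉ S γ := by
            intro hmem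
            obtain ⟨q, hq, hqle⟩ := Set.mem_iUnion.mp hmem
            have := hγ (q:ℝ) hq
            rw [Real.dist_eq, abs_sub_comm] at this
            have hint_eq : (∫ s in (0:ℝ)..(q:ℝ), Real.exp (-(γ * ((q:ℝ) - s))) * B' s ω)
                = ∫ s in (0:ℝ)..(q:ℝ), Real.exp (-(γ * ((q:ℝ) - s))) * B s ω := by
              simp only [hBB' ω hωN]
            rw [hint_eq, hBB' ω hωN] at hqle
            linarith
          simp [hnot]
        exact Tendsto.congr' (hev.mono fun γ h => h.symm) tendsto_const_nhds
    have heq : (fun γ => P (S γ))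
        = fun γ => ENNReal.ofReal (∫ ω, (S γ).indicator (fun _ => (1:ℝ)) ω ∂P) := by
      funext γ
      have h1 : ∫ ω, (S γ).indicator (fun _ => (1:ℝ)) ω ∂P = (P (S γ)).toReal :=
        MeasureTheory.integral_indicator_one (hSmeas γ)
      rw [h1, ENNReal.ofReal_toReal (measure_ne_top P _)]
    rw [heq]
    simpa [Function.comp_def] using (ENNReal.continuous_ofReal.tendsto 0).comp hint
  refine tendsto_of_tendsto_of_tendsto_of_le_of_le tendsto_const_nhds hS0
    (fun γ => zero_le) (fun γ => ?_)
  calc P {ω | ∃ t ∈ Set.Icc (0 : ℝ) T,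
        ε ≤ |γ * (∫ s in (0 : ℝ)..t, Real.exp (-(γ * (t - s))) * B s ω) - B t ω|}
      ≤ P (N ∪ S γ) := measure_mono (hsub γ)
    _ ≤ P N + P (S γ) := measure_union_le _ _
    _ = P (S γ) := by rw [hNnull, zero_add]
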